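/- Let β be a cobaric structure on a strictly ℤ^n-graded abelian category C, and g ≺ g' in ℤ^n. Then there are natural isomorphisms β_{⪯g} ∘ β_{⪯g'} ≅ β_{⪯g}, β_{⪰g} ∘ β_{⪰g'} ≅ β_{⪰g'}, β_{⪯g} ∘ β_{⪰g'} ≅ β_{⪰g'} ∘ β_{⪯g} ≅ 0, and β_{⪰g} ∘ β_{⪯g'} ≅ β_{⪯g'} ∘ β_{⪰g}. -/

import Mathlib

open CategoryTheory CategoryTheory.Limits

/-- Exactness of a composable pair in an abelian category. -/
def ExactAt {C : Type*} [Category C] [Abelian C] {X Y Z : C}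
    (f : X ⟶ Y) (g : Y ⟶ Z) : Prop :=
  ∃ w : f ≫ g = 0, (CategoryTheory.ShortComplex.mk f g w).Exact

/-- A class of objects is thick if it is closed under subobjects, quotients and
extensions. -/
def ThickPred {C : Type*} [Category C] [Abelian C] (P : C → Prop) : Prop :=
  (∀ (X Y : C) (f : X ⟶ Y), Mono f → P Y → P X) ∧
  (∀ (X Y : C) (f : X ⟶ Y), Epi f → P X → P Y) ∧
  (∀ (X Y Z : C) (f : X ⟶ Y) (g : Y ⟶ Z), Mono f → Epi g → ExactAt f g →
    P X → P Z → P Y)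

/-- The truncation data of a cobaric structure at a given cut of the degrees: a pair
of thick subcategories `(neg, pos)` (e.g. `(C_{⪯g}, C_{≻g})`) with `Hom(pos, neg) = 0`
and `Ext¹(pos, neg) = 0`, together with functorial short exact sequences
`0 → tpos X → X → tneg X → 0`. -/
structure CobaricCut (C : Type*) [Category C] [Abelian C] where
  neg : C → Prop
  pos : C → Prop
  tpos : C ⥤ C
  tneg : C ⥤ C
  ι : tpos ⟶ 𝟭 C
  π : 𝟭 C ⟶ tneg
  pos_mem : ∀ X, pos (tpos.obj X)
  neg_mem : ∀ X, neg (tneg.obj X)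
  mono : ∀ X, Mono (ι.app X)
  epi : ∀ X, Epi (π.app X)
  exact : ∀ X, ExactAt (ι.app X) (π.app X)
  hom0 : ∀ (X Y : C) (f : X ⟶ Y), pos X → neg Y → f = 0
  ext_split : ∀ (X Y Z : C) (f : X ⟶ Y) (g : Y ⟶ Z), neg X → pos Z →
    Mono f → Epi g → ExactAt f g → ∃ s : Z ⟶ Y, s ≫ g = 𝟙 Z
  neg_thick : ThickPred neg
  pos_thick : ThickPred pos

open CategoryTheory.Abelian
open Pseudoelement

namespace Cobaric15

variable {C : Type*} [Category C] [Abelian C]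

/-- The canonical short complex `tpos X ⟶ X ⟶ tneg X` of a cut. -/
def cutSC (c : CobaricCut C) (X : C) : ShortComplex C :=
  ShortComplex.mk (c.ι.app X) (c.π.app X) (c.exact X).1

lemma cutSC_exact (c : CobaricCut C) (X : C) : (cutSC c X).Exact := (c.exact X).2

lemma negUniq (c : CobaricCut C) {Y N : C} (u : Y ⟶ N) (hu : Epi u)
    (h1 : c.ι.app Y ≫ u = 0) (h2 : kernel.ι u ≫ c.π.app Y = 0) :
    ∃ e : c.tneg.obj Y ≅ N, c.π.app Y ≫ e.hom = u := by
  haveI := c.mono Y; haveI := c.epi Y; haveI := hu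
  haveI : Epi (cutSC c Y).g := c.epi Y
  obtain ⟨ψ, hψ⟩ := (cutSC_exact c Y).desc' u h1
  dsimp only [cutSC] at ψ hψ
  have hSC : (ShortComplex.mk (kernel.ι u) u (kernel.condition u)).Exact :=
    ShortComplex.exact_of_f_is_kernel _ (kernelIsKernel u)
  obtain ⟨φ, hφ⟩ := hSC.desc' (c.π.app Y) h2
  dsimp only at φ hφ
  refine ⟨⟨ψ, φ, ?_, ?_⟩, hψ⟩
  · rw [← cancel_epi (c.π.app Y)]
    simp only [Category.comp_id, reassoc_of% hψ, hφ]
  · rw [← cancel_epi u]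
    simp only [Category.comp_id, reassoc_of% hφ, hψ]

lemma posUniq (c : CobaricCut C) {P Y : C} (v : P ⟶ Y) (hv : Mono v)
    (h1 : v ≫ c.π.app Y = 0) (h2 : c.ι.app Y ≫ cokernel.π v = 0) :
    ∃ e : P ≅ c.tpos.obj Y, e.hom ≫ c.ι.app Y = v := by
  haveI := c.epi Y; haveI := c.mono Y; haveI := hv
  haveI : Mono (cutSC c Y).f := c.mono Y
  obtain ⟨φ, hφ⟩ := (cutSC_exact c Y).lift' v h1
  dsimp only [cutSC] at φ hφ
  have hSC : (ShortComplex.mk v (cokernel.π v) (cokernel.condition v)).Exact :=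
    ShortComplex.exact_of_g_is_cokernel _ (cokernelIsCokernel v)
  obtain ⟨ψ, hψ⟩ := hSC.lift' (c.ι.app Y) h2
  dsimp only at ψ hψ
  refine ⟨⟨φ, ψ, ?_, ?_⟩, hφ⟩
  · rw [← cancel_mono v]
    simp only [Category.assoc, Category.id_comp, hψ, hφ]
  · rw [← cancel_mono (c.ι.app Y)]
    simp only [Category.assoc, Category.id_comp, hφ, hψ]

lemma isZero_tneg (c : CobaricCut C) {X : C} (h : c.pos X) : IsZero (c.tneg.obj X) := by
  haveI := c.epi X
  have h0 : c.π.app X = 0 := c.hom0 _ _ _ h (c.neg_mem X)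
  rw [IsZero.iff_id_eq_zero, ← cancel_epi (c.π.app X), h0, zero_comp, zero_comp]

lemma isZero_tpos (c : CobaricCut C) {X : C} (h : c.neg X) : IsZero (c.tpos.obj X) := by
  haveI := c.mono X
  have h0 : c.ι.app X = 0 := c.hom0 _ _ _ (c.pos_mem X) h
  rw [IsZero.iff_id_eq_zero, ← cancel_mono (c.ι.app X), h0, comp_zero, comp_zero]

lemma isIso_ι (c : CobaricCut C) {X : C} (h : c.pos X) : IsIso (c.ι.app X) := by
  obtain ⟨e, he⟩ := posUniq c (𝟙 X) inferInstance
    (by simpa using c.hom0 _ _ (c.π.app X) h (c.neg_mem X))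
    (by
      have : cokernel.π (𝟙 X) = 0 := by
        rw [← Category.id_comp (cokernel.π (𝟙 X)), cokernel.condition]
      rw [this, comp_zero])
  have : c.ι.app X = e.inv := by
    rw [← cancel_epi e.hom, he, e.hom_inv_id]
  rw [this]; infer_instance

lemma isIso_π (c : CobaricCut C) {X : C} (h : c.neg X) : IsIso (c.π.app X) := by
  obtain ⟨e, he⟩ := negUniq c (𝟙 X) inferInstance
    (by simpa using c.hom0 _ _ (c.ι.app X) (c.pos_mem X) h)
    (by
      have : kernel.ι (𝟙 X) = 0 := by
        rw [← Category.comp_id (kernel.ι (𝟙 X)), kernel.condition]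
      rw [this, zero_comp])
  have : c.π.app X = e.inv := by
    rw [← cancel_mono e.hom, he, e.inv_hom_id]
  rw [this]; infer_instance


variable {C : Type*} [Category C] [Abelian C]

theorem stmt_15_aux (cB cA cC' cD : CobaricCut C)
    (hBA : ∀ X, cB.neg X → cA.neg X)
    (hAC : ∀ X, cA.neg X → cC'.neg X)
    (hCD : ∀ X, cC'.neg X → cD.neg X)
    (hDC : ∀ X, cD.pos X → cC'.pos X)
    (hCA : ∀ X, cC'.pos X → cA.pos X)
    (hAB : ∀ X, cA.pos X → cB.pos X) :
    Nonempty (cD.tneg ⋙ cA.tneg ≅ cA.tneg) ∧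
    Nonempty (cC'.tpos ⋙ cB.tpos ≅ cC'.tpos) ∧
    (∀ X : C, IsZero (cA.tneg.obj (cC'.tpos.obj X)) ∧
      IsZero (cC'.tpos.obj (cA.tneg.obj X))) ∧
    Nonempty (cD.tneg ⋙ cB.tpos ≅ cB.tpos ⋙ cD.tneg) := by
  refine ⟨?_, ?_, ?_, ?_⟩
  · -- part 1 : cD.tneg ⋙ cA.tneg ≅ cA.tneg
    have hι0 : ∀ X : C, cD.ι.app X ≫ cA.π.app X = 0 := fun X =>
      cA.hom0 _ _ _ (hCA _ (hDC _ (cD.pos_mem X))) (cA.neg_mem X)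
    have hex : ∀ X : C, ∃ v : cD.tneg.obj X ⟶ cA.tneg.obj X,
        cD.π.app X ≫ v = cA.π.app X := by
      intro X
      haveI : Epi (cutSC cD X).g := cD.epi X
      obtain ⟨v, hv⟩ := (cutSC_exact cD X).desc' (cA.π.app X) (hι0 X)
      exact ⟨v, hv⟩
    choose u hu using hex
    have huEpi : ∀ X, Epi (u X) := by
      intro X
      have h : Epi (cD.π.app X ≫ u X) := by rw [hu X]; exact cA.epi X
      exact @epi_of_epi _ _ _ _ _ _ _ h
    have hker : ∀ X : C, cA.pos (kernel (u X)) := by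
      intro X
      have w : (cA.ι.app X ≫ cD.π.app X) ≫ u X = 0 := by
        rw [Category.assoc, hu X, (cA.exact X).1]
      have hfepi : Epi (kernel.lift (u X) (cA.ι.app X ≫ cD.π.app X) w) := by
        apply Pseudoelement.epi_of_pseudo_surjective
        intro k
        have hk : (u X) ((kernel.ι (u X)) k) = 0 := by
          rw [← Pseudoelement.comp_apply, kernel.condition]
          exact Pseudoelement.zero_apply _ _
        haveI := cD.epi X
        obtain ⟨x, hx⟩ := Pseudoelement.pseudo_surjective_of_epi (cD.π.app X)
          ((kernel.ι (u X)) k)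
        have hx2 : (cA.π.app X) x = 0 := by
          rw [← hu X, Pseudoelement.comp_apply, hx, hk]
        obtain ⟨p, hp⟩ : ∃ p : Pseudoelement (cA.tpos.obj X), (cA.ι.app X) p = x :=
          Pseudoelement.pseudo_exact_of_exact (cutSC_exact cA X) x hx2
        have hp' : (cA.ι.app X) p = x := hp
        refine ⟨p, ?_⟩
        apply Pseudoelement.pseudo_injective_of_mono (kernel.ι (u X))
        rw [← Pseudoelement.comp_apply, kernel.lift_ι, Pseudoelement.comp_apply, hp', hx]
      exact cA.pos_thick.2.1 _ _ _ hfepi (cA.pos_mem X)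
    have hexe : ∀ X : C, ∃ e : cA.tneg.obj (cD.tneg.obj X) ≅ cA.tneg.obj X,
        cA.π.app (cD.tneg.obj X) ≫ e.hom = u X := fun X =>
      negUniq cA (u X) (huEpi X)
        (cA.hom0 _ _ _ (cA.pos_mem _) (cA.neg_mem X))
        (cA.hom0 _ _ _ (hker X) (cA.neg_mem _))
    choose e he using hexe
    have hun : ∀ {X Y : C} (f : X ⟶ Y), cD.tneg.map f ≫ u Y = u X ≫ cA.tneg.map f := by
      intro X Y f
      haveI := cD.epi X
      rw [← cancel_epi (cD.π.app X)]
      calc cD.π.app X ≫ cD.tneg.map f ≫ u Y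
          = (cD.π.app X ≫ cD.tneg.map f) ≫ u Y := by rw [Category.assoc]
        _ = (f ≫ cD.π.app Y) ≫ u Y := by
            rw [← cD.π.naturality f]; rfl
        _ = f ≫ cA.π.app Y := by rw [Category.assoc, hu Y]
        _ = cA.π.app X ≫ cA.tneg.map f := by
            have := cA.π.naturality f; simpa using this
        _ = cD.π.app X ≫ u X ≫ cA.tneg.map f := by rw [← Category.assoc, hu X]
    refine ⟨NatIso.ofComponents (fun X => e X) ?_⟩
    intro X Y f
    haveI := cA.epi (cD.tneg.obj X)
    rw [← cancel_epi (cA.π.app (cD.tneg.obj X))]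
    calc cA.π.app (cD.tneg.obj X) ≫ (cD.tneg ⋙ cA.tneg).map f ≫ (e Y).hom
        = (cA.π.app (cD.tneg.obj X) ≫ cA.tneg.map (cD.tneg.map f)) ≫ (e Y).hom := by
          rw [Category.assoc]; rfl
      _ = (cD.tneg.map f ≫ cA.π.app (cD.tneg.obj Y)) ≫ (e Y).hom := by
          rw [← cA.π.naturality (cD.tneg.map f)]; rfl
      _ = cD.tneg.map f ≫ u Y := by rw [Category.assoc, he Y]
      _ = u X ≫ cA.tneg.map f := hun f
      _ = cA.π.app (cD.tneg.obj X) ≫ (e X).hom ≫ cA.tneg.map f := by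
          rw [← Category.assoc, he X]
  · -- part 2 : cC'.tpos ⋙ cB.tpos ≅ cC'.tpos
    refine ⟨NatIso.ofComponents (fun X =>
      @asIso _ _ _ _ (cB.ι.app (cC'.tpos.obj X))
        (isIso_ι cB (hAB _ (hCA _ (cC'.pos_mem X))))) ?_⟩
    intro X Y f
    simpa using cB.ι.naturality (cC'.tpos.map f)
  · -- part 3 : zero composites
    exact fun X => ⟨isZero_tneg cA (hCA _ (cC'.pos_mem X)),
      isZero_tpos cC' (hAC _ (cA.neg_mem X))⟩
  · -- part 4 : cD.tneg ⋙ cB.tpos ≅ cB.tpos ⋙ cD.tneg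
    have hιπB0 : ∀ X : C, cD.ι.app X ≫ cB.π.app X = 0 := fun X =>
      cB.hom0 _ _ _ (hAB _ (hCA _ (hDC _ (cD.pos_mem X)))) (cB.neg_mem X)
    -- k : tpos_D X ⟶ tpos_B X
    have hexk : ∀ X : C, ∃ k : cD.tpos.obj X ⟶ cB.tpos.obj X,
        k ≫ cB.ι.app X = cD.ι.app X := by
      intro X
      haveI : Mono (cutSC cB X).f := cB.mono X
      obtain ⟨k, hk⟩ := (cutSC_exact cB X).lift' (cD.ι.app X) (hιπB0 X)
      exact ⟨k, hk⟩
    choose k hk using hexk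
    -- r : tneg_D X ⟶ tneg_B X
    have hexr : ∀ X : C, ∃ r : cD.tneg.obj X ⟶ cB.tneg.obj X,
        cD.π.app X ≫ r = cB.π.app X := by
      intro X
      haveI : Epi (cutSC cD X).g := cD.epi X
      obtain ⟨r, hr⟩ := (cutSC_exact cD X).desc' (cB.π.app X) (hιπB0 X)
      exact ⟨r, hr⟩
    choose r hr using hexr
    -- a : tneg_D (tpos_B X) ⟶ tneg_D X
    have hexa : ∀ X : C, ∃ a : cD.tneg.obj (cB.tpos.obj X) ⟶ cD.tneg.obj X,
        cD.π.app (cB.tpos.obj X) ≫ a = cB.ι.app X ≫ cD.π.app X := by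
      intro X
      haveI : Epi (cutSC cD (cB.tpos.obj X)).g := cD.epi _
      obtain ⟨a, ha⟩ := (cutSC_exact cD (cB.tpos.obj X)).desc' (cB.ι.app X ≫ cD.π.app X)
        (cD.hom0 _ _ _ (cD.pos_mem _) (cD.neg_mem X))
      exact ⟨a, ha⟩
    choose a ha using hexa
    have hBpos : ∀ X : C, cB.pos (cD.tneg.obj (cB.tpos.obj X)) := fun X =>
      cB.pos_thick.2.1 _ _ (cD.π.app (cB.tpos.obj X)) (cD.epi _) (cB.pos_mem X)
    -- θ : tneg_D (tpos_B X) ⟶ tpos_B (tneg_D X)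
    have hexθ : ∀ X : C, ∃ θ : cD.tneg.obj (cB.tpos.obj X) ⟶ cB.tpos.obj (cD.tneg.obj X),
        θ ≫ cB.ι.app (cD.tneg.obj X) = a X := by
      intro X
      haveI : Mono (cutSC cB (cD.tneg.obj X)).f := cB.mono _
      obtain ⟨θ, hθ⟩ := (cutSC_exact cB (cD.tneg.obj X)).lift' (a X)
        (cB.hom0 _ _ _ (hBpos X) (cB.neg_mem _))
      exact ⟨θ, hθ⟩
    choose θ hθ using hexθ
    have hθMono : ∀ X, Mono (θ X) := by
      intro X
      haveI := cB.mono X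
      apply Pseudoelement.mono_of_zero_of_map_zero
      intro t ht
      have hat : (a X) t = 0 := by
        rw [← hθ X, Pseudoelement.comp_apply, ht, Pseudoelement.apply_zero]
      haveI := cD.epi (cB.tpos.obj X)
      obtain ⟨y, hy⟩ := Pseudoelement.pseudo_surjective_of_epi (cD.π.app (cB.tpos.obj X)) t
      have h3 : (cD.π.app X) ((cB.ι.app X) y) = 0 := by
        rw [← Pseudoelement.comp_apply, ← ha X, Pseudoelement.comp_apply, hy, hat]
      obtain ⟨d, hd⟩ : ∃ d : Pseudoelement (cD.tpos.obj X), (cD.ι.app X) d = (cB.ι.app X) y :=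
        Pseudoelement.pseudo_exact_of_exact (cutSC_exact cD X) _ h3
      have hd' : (cD.ι.app X) d = (cB.ι.app X) y := hd
      have h4 : (k X) d = y := by
        apply Pseudoelement.pseudo_injective_of_mono (cB.ι.app X)
        rw [← Pseudoelement.comp_apply, hk X, hd']
      have h5 : k X ≫ cD.π.app (cB.tpos.obj X) = 0 :=
        cD.hom0 _ _ _ (cD.pos_mem X) (cD.neg_mem _)
      rw [← hy, ← h4, ← Pseudoelement.comp_apply, h5]
      exact Pseudoelement.zero_apply _ _
    have hθEpi : ∀ X, Epi (θ X) := by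
      intro X
      apply Pseudoelement.epi_of_pseudo_surjective
      intro z
      haveI := cD.epi X
      obtain ⟨x, hx⟩ := Pseudoelement.pseudo_surjective_of_epi (cD.π.app X)
        ((cB.ι.app (cD.tneg.obj X)) z)
      have h6 : cB.ι.app (cD.tneg.obj X) ≫ r X = 0 :=
        cB.hom0 _ _ _ (cB.pos_mem _) (cB.neg_mem _)
      have hπB : (cB.π.app X) x = 0 := by
        rw [← hr X, Pseudoelement.comp_apply, hx, ← Pseudoelement.comp_apply, h6]
        exact Pseudoelement.zero_apply _ _
      obtain ⟨y, hyx⟩ : ∃ y : Pseudoelement ((𝟭 C).obj (cB.tpos.obj X)), (cB.ι.app X) y = x :=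
        Pseudoelement.pseudo_exact_of_exact (cutSC_exact cB X) x hπB
      have hyx' : (cB.ι.app X) y = x := hyx
      refine ⟨(cD.π.app (cB.tpos.obj X)) y, ?_⟩
      haveI := cB.mono (cD.tneg.obj X)
      apply Pseudoelement.pseudo_injective_of_mono (cB.ι.app (cD.tneg.obj X))
      rw [← Pseudoelement.comp_apply, hθ X, ← Pseudoelement.comp_apply, ha X,
        Pseudoelement.comp_apply, hyx', hx]
    have hθIso : ∀ X, IsIso (θ X) := fun X => by
      haveI := hθMono X; haveI := hθEpi X
      exact isIso_of_mono_of_epi (θ X)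
    have hchar : ∀ Z : C, cD.π.app (cB.tpos.obj Z) ≫ θ Z ≫ cB.ι.app (cD.tneg.obj Z) =
        cB.ι.app Z ≫ cD.π.app Z := fun Z => by rw [hθ Z, ha Z]
    refine ⟨(NatIso.ofComponents (fun X => @asIso _ _ _ _ (θ X) (hθIso X)) ?_ :
      cB.tpos ⋙ cD.tneg ≅ cD.tneg ⋙ cB.tpos).symm⟩
    intro X Y f
    haveI := cD.epi (cB.tpos.obj X)
    haveI := cB.mono (cD.tneg.obj Y)
    show cD.tneg.map (cB.tpos.map f) ≫ θ Y = θ X ≫ cB.tpos.map (cD.tneg.map f)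
    rw [← cancel_epi (cD.π.app (cB.tpos.obj X)), ← cancel_mono (cB.ι.app (cD.tneg.obj Y))]
    have e1 : cD.π.app (cB.tpos.obj X) ≫ cD.tneg.map (cB.tpos.map f) =
        cB.tpos.map f ≫ cD.π.app (cB.tpos.obj Y) := by
      have := cD.π.naturality (cB.tpos.map f); simpa using this.symm
    have e2 : cB.tpos.map (cD.tneg.map f) ≫ cB.ι.app (cD.tneg.obj Y) =
        cB.ι.app (cD.tneg.obj X) ≫ cD.tneg.map f := by
      have := cB.ι.naturality (cD.tneg.map f); simpa using this
    have e3 : cB.tpos.map f ≫ cB.ι.app Y = cB.ι.app X ≫ f := by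
      have := cB.ι.naturality f; simpa using this
    have e4 : cD.π.app X ≫ cD.tneg.map f = f ≫ cD.π.app Y := by
      have := cD.π.naturality f; simpa using this.symm
    simp only [Category.assoc]
    conv_lhs => rw [← Category.assoc, e1, Category.assoc, hchar Y, ← Category.assoc, e3,
      Category.assoc, ← e4, ← Category.assoc, ← hchar X, Category.assoc, Category.assoc]
    conv_rhs => rw [e2]

end Cobaric15


/-- for a cobaric structure on a strictly `ℤ^n`-graded abelian category
and `g ≺ g'`, there are natural isomorphisms `β_{⪯g} ∘ β_{⪯g'} ≅ β_{⪯g}`,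
`β_{⪰g} ∘ β_{⪰g'} ≅ β_{⪰g'}`, `β_{⪯g} ∘ β_{⪰g'} ≅ β_{⪰g'} ∘ β_{⪯g} ≅ 0` and
`β_{⪰g} ∘ β_{⪯g'} ≅ β_{⪯g'} ∘ β_{⪰g}`.  Here the four relevant cuts are
`cB = (C_{≺g}, C_{⪰g})`, `cA = (C_{⪯g}, C_{≻g})`, `cC = (C_{≺g'}, C_{⪰g'})`,
`cD = (C_{⪯g'}, C_{≻g'})`, whose negative parts form a nested chain (as `g ≺ g'`), so
that `β_{⪯g} = cA.tneg`, `β_{⪰g} = cB.tpos`, `β_{⪯g'} = cD.tneg`,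
`β_{⪰g'} = cC.tpos`. -/
theorem stmt_15 {C : Type*} [Category C] [Abelian C]
    (cB cA cC' cD : CobaricCut C)
    (hBA : ∀ X, cB.neg X → cA.neg X)
    (hAC : ∀ X, cA.neg X → cC'.neg X)
    (hCD : ∀ X, cC'.neg X → cD.neg X)
    (hDC : ∀ X, cD.pos X → cC'.pos X)
    (hCA : ∀ X, cC'.pos X → cA.pos X)
    (hAB : ∀ X, cA.pos X → cB.pos X) :
    Nonempty (cD.tneg ⋙ cA.tneg ≅ cA.tneg) ∧
    Nonempty (cC'.tpos ⋙ cB.tpos ≅ cC'.tpos) ∧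
    (∀ X : C, IsZero (cA.tneg.obj (cC'.tpos.obj X)) ∧
      IsZero (cC'.tpos.obj (cA.tneg.obj X))) ∧
    Nonempty (cD.tneg ⋙ cB.tpos ≅ cB.tpos ⋙ cD.tneg) :=
  Cobaric15.stmt_15_aux cB cA cC' cD hBA hAC hCD hDC hCA hAB
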